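/- arXiv:2505.03951 — 3 statements merged into one kernel-verified Lean document; each statement's English description precedes it below -/
import Mathlib

section
/- Let P = C[x,y,z,w], P_N its homogeneous component of degree N, and L_1 = D_x D_y - D_z D_w. Then L_1 maps P_N onto P_{N-2} for N >= 2, and the kernel of L_1 restricted to P_N has dimension (N+1)^2. -/
open MvPolynomial

/-- Partial differentiation with respect to the `a`-th variable. -/
noncomputable def Dop (a : Fin 4) : Module.End ℂ (MvPolynomial (Fin 4) ℂ) :=
  (pderiv a).toLinearMap

/-- The lowering map `L₁ = DₓD_y - D_zD_w`. -/
noncomputable def Lone : Module.End ℂ (MvPolynomial (Fin 4) ℂ) :=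
  Dop 0 * Dop 1 - Dop 2 * Dop 3

namespace LoneAux

lemma degree_add (a b : Fin 4 →₀ ℕ) : (a + b).degree = a.degree + b.degree := by
  simp [Finsupp.degree_eq_weight_one, map_add]

lemma degree_single (i : Fin 4) (k : ℕ) : (Finsupp.single i k).degree = k := by
  rcases eq_or_ne k 0 with h | h
  · simp [h, Finsupp.degree]
  · simp [Finsupp.degree_apply, Finsupp.support_single_ne_zero _ h]

lemma mem_hs_iff {n : ℕ} {p : MvPolynomial (Fin 4) ℂ} :
    p ∈ homogeneousSubmodule (Fin 4) ℂ n ↔ ∀ d ∈ p.support, Finsupp.degree d = n := by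
  rw [homogeneousSubmodule_eq_finsupp_supported, AddMonoidAlgebra.mem_supported]
  constructor
  · intro h d hd; exact h hd
  · intro h d hd; exact h d hd

lemma monomial_mem {n : ℕ} {d : Fin 4 →₀ ℕ} (h : d.degree = n) (c : ℂ) :
    monomial d c ∈ homogeneousSubmodule (Fin 4) ℂ n :=
  (mem_homogeneousSubmodule _ _).2 (isHomogeneous_monomial c h)

lemma pderiv_mem {n : ℕ} {p : MvPolynomial (Fin 4) ℂ} (i : Fin 4)
    (hp : p ∈ homogeneousSubmodule (Fin 4) ℂ (n + 1)) :
    pderiv i p ∈ homogeneousSubmodule (Fin 4) ℂ n := by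
  rw [mem_hs_iff] at hp
  have hps : pderiv i p = ∑ v ∈ p.support, pderiv i (monomial v (coeff v p)) := by
    rw [← map_sum, ← p.as_sum]
  rw [hps]
  refine Submodule.sum_mem _ fun v hv => ?_
  rw [pderiv_monomial]
  rcases eq_or_ne (v i) 0 with h | h
  · simp [h]
  · refine monomial_mem ?_ _
    have hle : Finsupp.single i 1 ≤ v := by
      rw [Finsupp.single_le_iff]; omega
    have : (v - Finsupp.single i 1) + Finsupp.single i 1 = v := tsub_add_cancel_of_le hle
    have hdeg := hp v hv
    have := congrArg Finsupp.degree this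
    rw [degree_add, degree_single] at this
    omega

lemma pderiv_zero {p : MvPolynomial (Fin 4) ℂ} (i : Fin 4)
    (hp : p ∈ homogeneousSubmodule (Fin 4) ℂ 0) : pderiv i p = 0 := by
  rw [mem_hs_iff] at hp
  have hps : pderiv i p = ∑ v ∈ p.support, pderiv i (monomial v (coeff v p)) := by
    rw [← map_sum, ← p.as_sum]
  rw [hps]
  refine Finset.sum_eq_zero fun v hv => ?_
  have h0 : v = 0 := by
    have := hp v hv
    rwa [Finsupp.degree_eq_zero_iff] at this
  rw [h0, pderiv_monomial]
  simp

lemma Lone_apply (p : MvPolynomial (Fin 4) ℂ) :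
    Lone p = pderiv 0 (pderiv 1 p) - pderiv 2 (pderiv 3 p) := rfl

lemma Lone_mem {M : ℕ} {p : MvPolynomial (Fin 4) ℂ}
    (hp : p ∈ homogeneousSubmodule (Fin 4) ℂ (M + 2)) :
    Lone p ∈ homogeneousSubmodule (Fin 4) ℂ M := by
  rw [Lone_apply]
  exact Submodule.sub_mem _ (pderiv_mem 0 (pderiv_mem 1 hp)) (pderiv_mem 2 (pderiv_mem 3 hp))

lemma Lone_small {n : ℕ} (hn : n < 2) {p : MvPolynomial (Fin 4) ℂ}
    (hp : p ∈ homogeneousSubmodule (Fin 4) ℂ n) : Lone p = 0 := by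
  rw [Lone_apply]
  interval_cases n
  · rw [pderiv_zero 1 hp, pderiv_zero 3 hp]; simp
  · rw [pderiv_zero 0 (pderiv_mem 1 hp), pderiv_zero 2 (pderiv_mem 3 hp)]; simp


lemma monomial_mem_map (M : ℕ) :
    ∀ k (e : Fin 4 →₀ ℕ), e 2 = k → e.degree = M →
      (monomial e (1 : ℂ)) ∈ Submodule.map Lone (homogeneousSubmodule (Fin 4) ℂ (M + 2)) := by
  intro k
  induction k using Nat.strong_induction_on with
  | _ k ih =>
    intro e he2 hdeg
    set d : Fin 4 →₀ ℕ := e + Finsupp.single 0 1 + Finsupp.single 1 1 with hd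
    have hd0 : d 0 = e 0 + 1 := by simp [hd, Finsupp.single_apply]
    have hd1 : d 1 = e 1 + 1 := by simp [hd, Finsupp.single_apply]
    have hd2 : d 2 = e 2 := by simp [hd, Finsupp.single_apply]
    have hd3 : d 3 = e 3 := by simp [hd, Finsupp.single_apply]
    have hddeg : d.degree = M + 2 := by
      simp [hd, degree_add, degree_single, hdeg]
    have hdmem : (monomial d (1 : ℂ)) ∈ homogeneousSubmodule (Fin 4) ℂ (M + 2) :=
      monomial_mem hddeg 1
    set e' : Fin 4 →₀ ℕ := d - Finsupp.single 3 1 - Finsupp.single 2 1 with he'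
    set c1 : ℂ := ((e 1 : ℂ) + 1) * ((e 0 : ℂ) + 1) with hc1
    set c2 : ℂ := (e 3 : ℂ) * (e 2 : ℂ) with hc2
    have hc1ne : c1 ≠ 0 := by
      rw [hc1]
      exact mul_ne_zero (Nat.cast_add_one_ne_zero (e 1)) (Nat.cast_add_one_ne_zero (e 0))
    have hsub1 : d - Finsupp.single 1 1 = e + Finsupp.single 0 1 := by
      rw [hd]; exact add_tsub_cancel_right _ _
    have hsub0 : (e + Finsupp.single 0 1) - Finsupp.single 0 1 = e :=
      add_tsub_cancel_right _ _
    have hLone : Lone (monomial d (1 : ℂ)) = monomial e c1 - monomial e' c2 := by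
      rw [Lone_apply]
      rw [pderiv_monomial, pderiv_monomial, pderiv_monomial, pderiv_monomial]
      rw [hsub1, hsub0]
      congr 1
      · congr 1
        have h00 : (e + Finsupp.single 0 1 : Fin 4 →₀ ℕ) 0 = e 0 + 1 := by
          simp
        rw [hd1, h00]
        push_cast
        ring
      · congr 1
        have h32 : (d - Finsupp.single 3 1 : Fin 4 →₀ ℕ) 2 = e 2 := by
          rw [Finsupp.tsub_apply, hd2, Finsupp.single_apply]
          simp
        rw [hd3, h32]
        ring
    have key : monomial e (1 : ℂ) =
        c1⁻¹ • (Lone (monomial d (1 : ℂ)) + c2 • monomial e' (1 : ℂ)) := by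
      rw [hLone, MvPolynomial.smul_monomial, smul_eq_mul, mul_one,
        sub_add_cancel, MvPolynomial.smul_monomial, smul_eq_mul,
        inv_mul_cancel₀ hc1ne]
    rw [key]
    refine Submodule.smul_mem _ _ (Submodule.add_mem _ ⟨monomial d 1, hdmem, rfl⟩ ?_)
    rcases eq_or_ne c2 0 with h | h
    · rw [h, zero_smul]; exact zero_mem _
    · have he3p : 1 ≤ e 3 := by
        rcases Nat.eq_zero_or_pos (e 3) with h3 | h3
        · exact absurd (by rw [hc2, h3]; simp) h
        · omega
      have he2p : 1 ≤ e 2 := by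
        rcases Nat.eq_zero_or_pos (e 2) with h3 | h3
        · exact absurd (by rw [hc2, h3]; simp) h
        · omega
      have hle : Finsupp.single 3 1 ≤ d := by
        rw [Finsupp.single_le_iff, hd3]; omega
      have hle2 : Finsupp.single 2 1 ≤ d - Finsupp.single 3 1 := by
        rw [Finsupp.single_le_iff, Finsupp.tsub_apply, hd2, Finsupp.single_apply]
        simp; omega
      have he'2 : e' 2 = e 2 - 1 := by
        rw [he', Finsupp.tsub_apply, Finsupp.tsub_apply, hd2, Finsupp.single_apply,
          Finsupp.single_apply]
        simp
      have he'deg : e'.degree = M := by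
        have h1 : (d - Finsupp.single 3 1) + Finsupp.single 3 1 = d :=
          tsub_add_cancel_of_le hle
        have h2 : e' + Finsupp.single 2 1 = d - Finsupp.single 3 1 :=
          tsub_add_cancel_of_le hle2
        have := congrArg Finsupp.degree h1
        have h2' := congrArg Finsupp.degree h2
        rw [degree_add, degree_single] at this h2'
        omega
      exact Submodule.smul_mem _ _ (ih (e 2 - 1) (by omega) e' he'2 he'deg)


lemma card_toMultiset_eq (f : Fin 4 →₀ ℕ) : Multiset.card (Finsupp.toMultiset f) = f.degree := by
  rw [Finsupp.card_toMultiset]; rfl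

noncomputable def symEquiv (n : ℕ) : {d : Fin 4 →₀ ℕ | d.degree = n} ≃ Sym (Fin 4) n where
  toFun d := ⟨Finsupp.toMultiset d.1, by rw [card_toMultiset_eq]; exact d.2⟩
  invFun m := ⟨Multiset.toFinsupp m.1, by
    have h := card_toMultiset_eq (Multiset.toFinsupp m.1)
    rw [Multiset.toFinsupp_toMultiset] at h
    rw [Set.mem_setOf_eq, ← h, m.2]⟩
  left_inv d := by
    ext1
    exact Finsupp.toMultiset_toFinsupp d.1
  right_inv m := by
    ext1
    exact Multiset.toFinsupp_toMultiset m.1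

noncomputable instance (n : ℕ) : Fintype ↥{d : Fin 4 →₀ ℕ | d.degree = n} :=
  Fintype.ofEquiv _ (symEquiv n).symm

lemma card_degree_set (n : ℕ) :
    Fintype.card ↥{d : Fin 4 →₀ ℕ | d.degree = n} = (n + 3).choose 3 := by
  rw [Fintype.card_congr (symEquiv n), Sym.card_sym_eq_choose]
  have h4 : Fintype.card (Fin 4) = 4 := by simp
  rw [h4]
  have h1 : 4 + n - 1 = n + 3 := by omega
  rw [h1]
  have h2 : n = (n + 3) - 3 := by omega
  conv_lhs => rw [h2]
  exact Nat.choose_symm (by omega)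

lemma finrank_hs (n : ℕ) :
    Module.finrank ℂ (homogeneousSubmodule (Fin 4) ℂ n) = (n + 3).choose 3 := by
  rw [homogeneousSubmodule_eq_finsupp_supported]
  show Module.finrank ℂ (MvPolynomial.restrictSupport ℂ {d : Fin 4 →₀ ℕ | d.degree = n}) = _
  rw [Module.finrank_eq_card_basis
    (MvPolynomial.basisRestrictSupport ℂ {d : Fin 4 →₀ ℕ | d.degree = n})]
  exact card_degree_set n

instance hs_finite (n : ℕ) : FiniteDimensional ℂ (homogeneousSubmodule (Fin 4) ℂ n) := by
  rw [homogeneousSubmodule_eq_finsupp_supported]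
  show Module.Finite ℂ (MvPolynomial.restrictSupport ℂ {d : Fin 4 →₀ ℕ | d.degree = n})
  exact Module.Finite.of_basis (MvPolynomial.basisRestrictSupport ℂ {d : Fin 4 →₀ ℕ | d.degree = n})

lemma two_mul_c2 (n : ℕ) : 2 * (n + 2).choose 2 = (n + 1) * (n + 2) := by
  induction n with
  | zero => rfl
  | succ m ih =>
    have h : (m + 3).choose 2 = (m + 2).choose 1 + (m + 2).choose 2 := Nat.choose_succ_succ _ _
    rw [h, Nat.choose_one_right, Nat.mul_add, ih]
    ring

lemma six_mul_c3 (n : ℕ) : 6 * (n + 3).choose 3 = (n + 1) * (n + 2) * (n + 3) := by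
  induction n with
  | zero => rfl
  | succ m ih =>
    have h : (m + 4).choose 3 = (m + 3).choose 2 + (m + 3).choose 3 := Nat.choose_succ_succ _ _
    have h2 := two_mul_c2 (m + 1)
    rw [h, Nat.mul_add, ih]
    nlinarith [h2]

end LoneAux

theorem Lone_image_and_kernel (N : ℕ) :
    (2 ≤ N →
      Submodule.map Lone (homogeneousSubmodule (Fin 4) ℂ N) =
        homogeneousSubmodule (Fin 4) ℂ (N - 2)) ∧
    Module.finrank ℂ
        ↥(LinearMap.ker Lone ⊓ homogeneousSubmodule (Fin 4) ℂ N) = (N + 1) ^ 2 := by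
  have himg : 2 ≤ N → Submodule.map Lone (homogeneousSubmodule (Fin 4) ℂ N) =
      homogeneousSubmodule (Fin 4) ℂ (N - 2) := by
    intro hN
    obtain ⟨M, rfl⟩ : ∃ M, N = M + 2 := ⟨N - 2, by omega⟩
    have hNM : M + 2 - 2 = M := by omega
    rw [hNM]
    apply le_antisymm
    · rintro _ ⟨p, hp, rfl⟩
      exact LoneAux.Lone_mem hp
    · intro p hp
      have hsup := LoneAux.mem_hs_iff.mp hp
      rw [p.as_sum]
      refine Submodule.sum_mem _ fun v hv => ?_
      have : (monomial v (coeff v p) : MvPolynomial (Fin 4) ℂ) = coeff v p • monomial v 1 := by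
        rw [MvPolynomial.smul_monomial, smul_eq_mul, mul_one]
      rw [this]
      exact Submodule.smul_mem _ _
        (LoneAux.monomial_mem_map M (v 2) v rfl (hsup v hv))
  refine ⟨himg, ?_⟩
  set f : (homogeneousSubmodule (Fin 4) ℂ N) →ₗ[ℂ] MvPolynomial (Fin 4) ℂ :=
    (Lone : Module.End ℂ (MvPolynomial (Fin 4) ℂ)) ∘ₗ
      (homogeneousSubmodule (Fin 4) ℂ N).subtype with hf
  have hker : LinearMap.ker f =
      Submodule.comap (homogeneousSubmodule (Fin 4) ℂ N).subtype (LinearMap.ker Lone) :=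
    LinearMap.ker_comp _ _
  have hrange : LinearMap.range f = Submodule.map Lone (homogeneousSubmodule (Fin 4) ℂ N) := by
    rw [hf, LinearMap.range_comp, Submodule.range_subtype]
  have e1 : Module.finrank ℂ
      ↥(LinearMap.ker Lone ⊓ homogeneousSubmodule (Fin 4) ℂ N) =
      Module.finrank ℂ (LinearMap.ker f) := by
    rw [hker, inf_comm, ← Submodule.map_comap_subtype]
    exact (Submodule.equivMapOfInjective _
      (Submodule.injective_subtype (homogeneousSubmodule (Fin 4) ℂ N)) _).finrank_eq.symm
  rw [e1]
  have hrn := LinearMap.finrank_range_add_finrank_ker f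
  rcases lt_or_ge N 2 with hN | hN
  · have hker_top : LinearMap.ker f = ⊤ := by
      rw [LinearMap.ker_eq_top]
      apply LinearMap.ext
      rintro ⟨p, hp⟩
      simp only [LinearMap.comp_apply, Submodule.coe_subtype, LinearMap.zero_apply, hf]
      exact LoneAux.Lone_small hN hp
    rw [hker_top, finrank_top]
    have := LoneAux.finrank_hs N
    interval_cases N
    · simpa using this
    · simpa using this
  · obtain ⟨M, rfl⟩ : ∃ M, N = M + 2 := ⟨N - 2, by omega⟩
    rw [himg hN] at hrange
    have hNM : M + 2 - 2 = M := by omega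
    rw [hNM] at hrange
    rw [hrange, LoneAux.finrank_hs M] at hrn
    rw [LoneAux.finrank_hs (M + 2)] at hrn
    have h3 := LoneAux.six_mul_c3 M
    have h5 := LoneAux.six_mul_c3 (M + 2)
    have h7 : (M + 1) * (M + 2) * (M + 3) + 6 * Module.finrank ℂ (LinearMap.ker f) =
        (M + 2 + 1) * (M + 2 + 2) * (M + 2 + 3) := by
      rw [← h3, ← h5, ← hrn]; ring
    have hpoly : (M + 1) * (M + 2) * (M + 3) + 6 * ((M + 2 + 1) ^ 2) =
        (M + 2 + 1) * (M + 2 + 2) * (M + 2 + 3) := by ring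
    linarith [h7, hpoly]
end

section
/- For N a natural number, define polynomials f_0, ..., f_{N+1} in C[eta] by f_0 = 1, f_{-1}=0, and the recurrence eta*f_n = n*f_{n-1} + (N-n)*f_{n+1} for 0 <= n <= N-1, together with eta*f_N = N*f_{N-1} + f_{N+1}. Then f_{N+1}(eta) = (eta-N)(eta-N+2)(eta-N+4)...(eta+N) / N!, i.e., N! * f_{N+1}(eta) equals the product over i = 0,...,N of (eta - N + 2i). -/
open Polynomial

section KrawAux
open Finset

namespace Kraw
def d (N j k : ℕ) : ℂ := ∏ i ∈ range k, ((N:ℂ) - j - i)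
noncomputable def c (N n j : ℕ) : ℂ := (n.choose j : ℂ) * d N j (n - j)
lemma d_succ (N j k : ℕ) : d N j (k+1) = d N j k * ((N:ℂ) - j - k) := by
  simp [d, prod_range_succ]
lemma d_shift (N k m : ℕ) : d N k (m+1) = ((N:ℂ) - k) * d N (k+1) m := by
  rw [d, prod_range_succ']
  simp only [Nat.cast_zero, sub_zero]
  rw [mul_comm, d]
  congr 1
  apply prod_congr rfl
  intro i _
  push_cast
  ring

-- cast binomial identities
lemma hA (n k : ℕ) : ((k:ℂ)+1) * ((n+1).choose (k+1)) = ((n:ℂ)+1) * (n.choose k) := by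
  have h := Nat.add_one_mul_choose_eq n k
  have h2 : ((n+1) * n.choose k : ℂ) = ((n+1).choose (k+1) * (k+1) : ℂ) := by
    exact_mod_cast congrArg (fun m : ℕ => (m : ℂ)) h
  push_cast at h2
  linear_combination -h2

lemma hC (n k : ℕ) : ((n:ℂ)+1) * ((n+1).choose k) = (k:ℂ) * ((n+1).choose k) + ((n:ℂ)+1) * (n.choose k) := by
  rcases le_or_gt k (n+1) with h | h
  · have h1 := Nat.choose_mul_succ_eq n k
    -- n.choose k * (n+1) = (n+1).choose k * (n+1-k)
    have h2 : ((n.choose k * (n+1) : ℕ) : ℂ) = (((n+1).choose k * (n+1-k) : ℕ) : ℂ) := by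
      exact_mod_cast congrArg (fun m : ℕ => (m : ℂ)) h1
    push_cast [Nat.cast_sub h] at h2
    linear_combination -h2
  · have h1 : n.choose k = 0 := Nat.choose_eq_zero_of_lt (by omega)
    have h2 : (n+1).choose k = 0 := Nat.choose_eq_zero_of_lt h
    simp [h1, h2]

lemma pas (n k : ℕ) : (((n+1).choose (k+1) : ℕ) : ℂ) = (n.choose k : ℂ) + (n.choose (k+1) : ℂ) := by
  rw [Nat.choose_succ_succ]
  push_cast
  ring

lemma d_zero (N j : ℕ) : d N j 0 = 1 := by simp [d]

lemma d_one (N j : ℕ) : d N j 1 = (N:ℂ) - j := by simp [d]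

lemma c_eq_zero (N n j : ℕ) (h : n < j) : c N n j = 0 := by
  simp [c, Nat.choose_eq_zero_of_lt h]

lemma star (N n j : ℕ) :
    c N (n+2) j = (if j = 0 then 0 else c N (n+1) (j-1))
      + ((N:ℂ) - 2*j) * c N (n+1) j - (((n:ℂ)+1) * ((N:ℂ) - n)) * c N n j := by
  match j with
  | 0 =>
    simp only [if_pos rfl, c, Nat.choose_zero_right, Nat.cast_one, one_mul, Nat.sub_zero,
      Nat.cast_zero, mul_zero, sub_zero]
    rw [show n+2 = (n+1)+1 from rfl, d_succ, d_succ]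
    push_cast
    ring
  | (k+1) =>
    rcases le_or_gt (k+1) n with hle | hlt
    · obtain ⟨m, rfl⟩ := Nat.exists_eq_add_of_le hle
      have e1 : k+1+m+2 - (k+1) = m+2 := by omega
      have e2 : k+1+m+1 - k = m+2 := by omega
      have e3 : k+1+m+1 - (k+1) = m+1 := by omega
      have e4 : k+1+m - (k+1) = m := by omega
      simp only [c, if_neg (Nat.succ_ne_zero k), Nat.add_sub_cancel, e1, e2, e3, e4]
      rw [show (m+2 : ℕ) = (m+1)+1 from rfl, d_succ N (k+1) (m+1), d_succ N (k+1) m,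
        d_shift N k (m+1), d_succ N (k+1) m]
      have p1 := pas (k+1+m+1) k
      have p2 := pas (k+1+m) k
      have a1 := hA (k+1+m) k
      have c1 := hC (k+1+m) k
      push_cast at p1 p2 a1 c1 ⊢
      linear_combination (d N (k+1) m * ((N:ℂ) - (k+1) - m) * ((N:ℂ) - ((k:ℂ)+1+m+1))) * p1
        - (d N (k+1) m * ((N:ℂ) - (k+1) - m)) * c1
        - (d N (k+1) m * ((N:ℂ) - (k+1) - m) * ((k:ℂ)+1+m+1)) * p2
        + (2 * d N (k+1) m * ((N:ℂ) - (k+1) - m)) * a1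
    · rcases Nat.lt_trichotomy k (n+1) with hk | hk | hk
      · have hkn : k = n := by omega
        subst hkn
        have z : c N k (k+1) = 0 := c_eq_zero N k (k+1) (by omega)
        simp only [z, mul_zero, sub_zero]
        simp only [c, if_neg (Nat.succ_ne_zero k), Nat.add_sub_cancel,
          Nat.choose_succ_self_right, Nat.choose_self,
          show k+2-(k+1) = 1 from by omega, show k+1-k = 1 from by omega,
          show k+1-(k+1) = 0 from by omega, d_zero, d_one]
        push_cast
        ring
      · subst hk
        have z1 : c N (n+1) (n+2) = 0 := c_eq_zero N (n+1) (n+2) (by omega)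
        have z2 : c N n (n+2) = 0 := c_eq_zero N n (n+2) (by omega)
        simp only [z1, z2, mul_zero, add_zero, sub_zero]
        simp only [c, if_neg (Nat.succ_ne_zero (n+1)), Nat.add_sub_cancel,
          Nat.choose_self, show n+2-(n+2) = 0 from by omega,
          show n+1-(n+1) = 0 from by omega, d_zero]
      · have z1 : c N (n+2) (k+1) = 0 := c_eq_zero _ _ _ (by omega)
        have z2 : c N (n+1) k = 0 := c_eq_zero _ _ _ (by omega)
        have z3 : c N (n+1) (k+1) = 0 := c_eq_zero _ _ _ (by omega)
        have z4 : c N n (k+1) = 0 := c_eq_zero _ _ _ (by omega)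
        simp [z1, z2, z3, z4]


noncomputable def u (N j : ℕ) : Polynomial ℂ := ∏ i ∈ range j, (X - C ((N:ℂ) - 2*i))

noncomputable def g (N : ℕ) : ℕ → Polynomial ℂ
  | 0 => 1
  | 1 => X
  | (n+2) => X * g N (n+1) - (((n:ℂ)+1) * ((N:ℂ) - n)) • g N n

lemma Xu (N j : ℕ) : X * u N j = u N (j+1) + ((N:ℂ) - 2*j) • u N j := by
  have h : u N (j+1) = u N j * (X - C ((N:ℂ) - 2*j)) := by
    rw [u, prod_range_succ, ← u]
  rw [h, smul_eq_C_mul]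
  ring

lemma expand (N n : ℕ) : g N n = ∑ j ∈ range (n+1), c N n j • u N j := by
  induction n using Nat.strong_induction_on with
  | _ n ih =>
    match n with
    | 0 => simp [g, c, d_zero, u]
    | 1 =>
      rw [g]
      rw [show (1:ℕ)+1 = 2 from rfl, sum_range_succ, sum_range_succ, sum_range_zero]
      simp [c, d, u, smul_eq_C_mul]
    | (n+2) =>
      have ih1 : g N (n+1) = ∑ j ∈ range (n+3), c N (n+1) j • u N j := by
        rw [ih (n+1) (by omega), sum_range_succ (fun j => c N (n+1) j • u N j) (n+2),
          c_eq_zero N (n+1) (n+2) (by omega)]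
        simp
      have ih0 : g N n = ∑ j ∈ range (n+3), c N n j • u N j := by
        rw [ih n (by omega), sum_range_succ (fun j => c N n j • u N j) (n+2),
          sum_range_succ (fun j => c N n j • u N j) (n+1),
          c_eq_zero N n (n+1) (by omega), c_eq_zero N n (n+2) (by omega)]
        simp
      rw [g, ih1, ih0, Finset.mul_sum, Finset.smul_sum]
      have h1 : ∀ j ∈ range (n+3), X * (c N (n+1) j • u N j)
          = c N (n+1) j • u N (j+1) + (((N:ℂ)-2*j) * c N (n+1) j) • u N j := by
        intro j _
        rw [mul_smul_comm, Xu, smul_add, smul_smul, mul_comm (c N (n+1) j)]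
      rw [sum_congr rfl h1, sum_add_distrib]
      have h2 : ∑ j ∈ range (n+3), c N (n+1) j • u N (j+1)
          = ∑ j ∈ range (n+3), (if j = 0 then 0 else c N (n+1) (j-1)) • u N j := by
        rw [sum_range_succ, c_eq_zero N (n+1) (n+2) (by omega), zero_smul, add_zero,
          sum_range_succ' (fun j => (if j = 0 then 0 else c N (n+1) (j-1)) • u N j) (n+2)]
        simp
      rw [h2]
      have h3 : ∀ j ∈ range (n+3), (((n:ℂ)+1) * ((N:ℂ) - n)) • (c N n j • u N j)
          = ((((n:ℂ)+1) * ((N:ℂ) - n)) * c N n j) • u N j := by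
        intro j _; rw [smul_smul]
      rw [sum_congr rfl h3, ← sum_add_distrib, ← sum_sub_distrib]
      apply sum_congr rfl
      intro j _
      rw [← add_smul, ← sub_smul, ← star N n j]


lemma top_coeff (N : ℕ) : g N (N+1) = u N (N+1) := by
  rw [expand, sum_range_succ]
  have hz : ∀ j ∈ range (N+1), c N (N+1) j • u N j = 0 := by
    intro j hj
    rw [mem_range] at hj
    have hd : d N j (N+1-j) = 0 := by
      apply Finset.prod_eq_zero (i := N - j)
      · rw [mem_range]; omega
      · have hc : ((N - j : ℕ) : ℂ) = (N:ℂ) - j := by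
          push_cast [Nat.cast_sub (by omega : j ≤ N)]
          ring
        rw [hc]; ring
    rw [c, hd, mul_zero, zero_smul]
  rw [sum_eq_zero hz, zero_add, c, Nat.choose_self, Nat.sub_self, d_zero]
  simp

end Kraw

end KrawAux

open Kraw

/-- The top Krawtchouk polynomial: if `f 0 = 1`, `η f_n = n f_{n-1} + (N-n) f_{n+1}`
for `0 ≤ n ≤ N-1` (with `f_{-1} = 0`), and `η f_N = N f_{N-1} + f_{N+1}`, then
`N! f_{N+1}(η) = (η-N)(η-N+2)⋯(η+N)`. -/
theorem krawtchouk_top (N : ℕ) (f : ℕ → Polynomial ℂ)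
    (h0 : f 0 = 1)
    (hrec : ∀ n, n < N →
      X * f n = (n : ℂ) • f (n - 1) + ((N : ℂ) - (n : ℂ)) • f (n + 1))
    (htop : X * f N = (N : ℂ) • f (N - 1) + f (N + 1)) :
    (N.factorial : ℂ) • f (N + 1) =
      ∏ i ∈ Finset.range (N + 1), (X - C ((N : ℂ) - 2 * (i : ℂ))) := by
  have L1 : ∀ n, n ≤ N → g N n = (N.descFactorial n : ℂ) • f n := by
    intro n
    induction n using Nat.strong_induction_on with
    | _ n ih =>
      match n with
      | 0 => intro _; simp [g, h0]
      | 1 =>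
        intro h1
        have hr := hrec 0 (by omega)
        simp only [Nat.cast_zero, zero_smul, zero_add, sub_zero, h0, mul_one] at hr
        rw [g, hr, Nat.descFactorial_one]
      | (n+2) =>
        intro hn
        have i1 := ih (n+1) (by omega) (by omega)
        have i0 := ih n (by omega) (by omega)
        have hr := hrec (n+1) (by omega)
        simp only [Nat.add_sub_cancel] at hr
        have d1 : (N.descFactorial (n+1) : ℂ) = ((N:ℂ) - n) * (N.descFactorial n : ℂ) := by
          rw [Nat.descFactorial_succ]
          push_cast [Nat.cast_sub (by omega : n ≤ N)]
          ring
        have d2 : (N.descFactorial (n+2) : ℂ)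
            = ((N:ℂ) - (n+1)) * ((N:ℂ) - n) * (N.descFactorial n : ℂ) := by
          rw [show n+2 = (n+1)+1 from rfl, Nat.descFactorial_succ]
          push_cast [Nat.cast_sub (by omega : n+1 ≤ N)]
          rw [d1]
          ring
        rw [g, i1, i0, mul_smul_comm, hr, d1, d2]
        push_cast
        module
  have L2 : g N (N+1) = (N.factorial : ℂ) • f (N+1) := by
    cases N with
    | zero =>
      have : f 1 = X := by
        have := htop
        simp only [Nat.cast_zero, zero_smul, zero_add, h0, mul_one] at this
        exact this.symm
      simp [g, this]
    | succ M =>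
      have e1 : (M+1).descFactorial (M+1) = (M+1).factorial := Nat.descFactorial_self (M+1)
      have e2 : (M+1).descFactorial M = (M+1).factorial := by
        have h := Nat.descFactorial_self (M+1)
        rw [Nat.descFactorial_succ, show M+1-M = 1 from by omega, one_mul] at h
        exact h
      have ht := htop
      simp only [Nat.add_sub_cancel] at ht
      rw [show M+1+1 = M+2 from rfl, g, L1 (M+1) le_rfl, L1 M (by omega), e1, e2,
        mul_smul_comm, ht]
      push_cast
      module
  rw [← L2, top_coeff, u]
end

section
/- Let N be a natural number. Define P_N as the set of 4-tuples (r,s,t,u) of natural numbers with r+s+t+u = N, and P''_N as the set of integer triples (h,i,j) with 0 <= h,i,j <= N, h+i+j even, h+i+j <= 2N, and satisfying the triangle inequalities h <= i+j, i <= j+h, j <= h+i. Then the map (r,s,t,u) |-> (t+u, u+s, s+t) is a bijection from P_N to P''_N, with inverse (h,i,j) |-> ((2N-h-i-j)/2, (i+j-h)/2, (j+h-i)/2, (h+i-j)/2). -/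
/-- The set of profiles of degree `N`: 4-tuples of naturals summing to `N`. -/
def ProfileSet (N : ℕ) : Type :=
  {p : ℕ × ℕ × ℕ × ℕ // p.1 + p.2.1 + p.2.2.1 + p.2.2.2 = N}

/-- The set `𝒫''_N` of triples `(h,i,j)`. -/
def TriangleSet (N : ℕ) : Type :=
  {q : ℕ × ℕ × ℕ //
    q.1 ≤ N ∧ q.2.1 ≤ N ∧ q.2.2 ≤ N ∧
    Even (q.1 + q.2.1 + q.2.2) ∧ q.1 + q.2.1 + q.2.2 ≤ 2 * N ∧
    q.1 ≤ q.2.1 + q.2.2 ∧ q.2.1 ≤ q.2.2 + q.1 ∧ q.2.2 ≤ q.1 + q.2.1}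

private lemma mem_tri (N r s t u : ℕ) (hp : r + s + t + u = N) :
    t + u ≤ N ∧ u + s ≤ N ∧ s + t ≤ N ∧
    Even (t + u + (u + s) + (s + t)) ∧ t + u + (u + s) + (s + t) ≤ 2 * N ∧
    t + u ≤ u + s + (s + t) ∧ u + s ≤ s + t + (t + u) ∧ s + t ≤ t + u + (u + s) :=
  ⟨by omega, by omega, by omega, ⟨s + t + u, by ring⟩, by omega, by omega, by omega, by omega⟩

private lemma mem_prof (N a b c : ℕ)
    (H : a ≤ N ∧ b ≤ N ∧ c ≤ N ∧ Even (a + b + c) ∧ a + b + c ≤ 2 * N ∧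
      a ≤ b + c ∧ b ≤ c + a ∧ c ≤ a + b) :
    (2 * N - a - b - c) / 2 + (b + c - a) / 2 + (c + a - b) / 2 + (a + b - c) / 2 = N := by
  obtain ⟨h1, h2, h3, ⟨k, hk⟩, h5, h6, h7, h8⟩ := H
  omega

private lemma li (N r s t u : ℕ) (hp : r + s + t + u = N) :
    ((2 * N - (t + u) - (u + s) - (s + t)) / 2,
     (u + s + (s + t) - (t + u)) / 2,
     (s + t + (t + u) - (u + s)) / 2,
     (t + u + (u + s) - (s + t)) / 2) = ((r, s, t, u) : ℕ × ℕ × ℕ × ℕ) := by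
  simp only [Prod.mk.injEq]
  refine ⟨?_, ?_, ?_, ?_⟩ <;> omega

private lemma ri (N a b c : ℕ)
    (H : a ≤ N ∧ b ≤ N ∧ c ≤ N ∧ Even (a + b + c) ∧ a + b + c ≤ 2 * N ∧
      a ≤ b + c ∧ b ≤ c + a ∧ c ≤ a + b) :
    ((c + a - b) / 2 + (a + b - c) / 2,
     (a + b - c) / 2 + (b + c - a) / 2,
     (b + c - a) / 2 + (c + a - b) / 2) = ((a, b, c) : ℕ × ℕ × ℕ) := by
  obtain ⟨h1, h2, h3, ⟨k, hk⟩, h5, h6, h7, h8⟩ := H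
  simp only [Prod.mk.injEq]
  refine ⟨?_, ?_, ?_⟩ <;> omega

/-- The map `(r,s,t,u) ↦ (t+u, u+s, s+t)` is a bijection from `𝒫_N` to `𝒫''_N`,
with the indicated inverse. -/
theorem profile_triangle_bijection (N : ℕ) :
    ∃ e : ProfileSet N ≃ TriangleSet N,
      (∀ p : ProfileSet N,
        (e p).val = (p.val.2.2.1 + p.val.2.2.2, p.val.2.2.2 + p.val.2.1,
          p.val.2.1 + p.val.2.2.1)) ∧
      (∀ q : TriangleSet N,
        (e.symm q).val =
          ((2 * N - q.val.1 - q.val.2.1 - q.val.2.2) / 2,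
           (q.val.2.1 + q.val.2.2 - q.val.1) / 2,
           (q.val.2.2 + q.val.1 - q.val.2.1) / 2,
           (q.val.1 + q.val.2.1 - q.val.2.2) / 2)) := by
  refine ⟨{
    toFun := fun p =>
      ⟨(p.val.2.2.1 + p.val.2.2.2, p.val.2.2.2 + p.val.2.1, p.val.2.1 + p.val.2.2.1),
        mem_tri N p.val.1 p.val.2.1 p.val.2.2.1 p.val.2.2.2 p.prop⟩
    invFun := fun q =>
      ⟨((2 * N - q.val.1 - q.val.2.1 - q.val.2.2) / 2,
        (q.val.2.1 + q.val.2.2 - q.val.1) / 2,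
        (q.val.2.2 + q.val.1 - q.val.2.1) / 2,
        (q.val.1 + q.val.2.1 - q.val.2.2) / 2),
        mem_prof N q.val.1 q.val.2.1 q.val.2.2 q.prop⟩
    left_inv := fun p => Subtype.ext (li N p.val.1 p.val.2.1 p.val.2.2.1 p.val.2.2.2 p.prop)
    right_inv := fun q => Subtype.ext (ri N q.val.1 q.val.2.1 q.val.2.2 q.prop) },
    fun p => rfl, fun q => rfl⟩
end
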